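/- Let α, σ, β_ind, p ≥ 0. In the limit β → 0, E(K) → ∞ with β(1+E(K)) → β_ind, the first-order approximation κ_o^-(a) = κ̂(a)(1 + (pσE(K)/(α+σ-β))(e^{-βa} - κ̂(a)) - (pσE(K)/(α+σ))(1 - κ̂(a))) converges pointwise to κ̂(a) - (pσβ_ind/(α+σ)) κ̂(a) (a - (1 - κ̂(a))/(α+σ)), where κ̂(a) = e^{-(α+σ)a}. -/

import Mathlib

open Real Filter Topology

theorem backward_first_order_homogeneous_limit (α σ βind p a : ℝ)
    (hα : 0 ≤ α) (hσ : 0 ≤ σ) (hβind : 0 ≤ βind) (hp : 0 ≤ p) (ha : 0 ≤ a)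
    (β EK : ℕ → ℝ)
    (hβ : Tendsto β atTop (𝓝 0))
    (hEK : Tendsto EK atTop atTop)
    (hscale : Tendsto (fun n => β n * (1 + EK n)) atTop (𝓝 βind)) :
    Tendsto
      (fun n =>
        Real.exp (-(α + σ) * a) *
          (1 + p * σ * EK n / (α + σ - β n) *
                (Real.exp (-(β n) * a) - Real.exp (-(α + σ) * a))
             - p * σ * EK n / (α + σ) * (1 - Real.exp (-(α + σ) * a))))
      atTop
      (𝓝 (Real.exp (-(α + σ) * a) -
            p * σ * βind / (α + σ) * Real.exp (-(α + σ) * a) *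
              (a - (1 - Real.exp (-(α + σ) * a)) / (α + σ)))) := by
  rcases eq_or_lt_of_le (by linarith : (0:ℝ) ≤ α + σ) with hs | hs
  · -- degenerate case: α = σ = 0
    have hσ0 : σ = 0 := by linarith
    have hα0 : α = 0 := by linarith
    subst hσ0; subst hα0
    simp
  · -- main case
    set s := α + σ with hsdef
    set c := Real.exp (-s * a) with hc
    -- β n * EK n → βind
    have hEKβ : Tendsto (fun n => EK n * β n) atTop (𝓝 βind) := by
      have h1 := hscale.sub hβ
      rw [sub_zero] at h1
      refine h1.congr (fun n => by ring)
    -- h β = slope of exp(-β a) at 0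
    set h : ℝ → ℝ := fun b => if b = 0 then -a else (Real.exp (-b * a) - 1) / b with hh
    have hht : Tendsto h (𝓝 0) (𝓝 (-a)) := by
      rw [← nhdsNE_sup_pure, tendsto_sup]
      constructor
      · have hd : HasDerivAt (fun b : ℝ => Real.exp (-b * a)) (-a) 0 := by
          have : HasDerivAt (fun b : ℝ => Real.exp (-b * a)) (Real.exp (-(0:ℝ) * a) * (-a)) 0 := by
            have h1 : HasDerivAt (fun b : ℝ => -b * a) (-a) (0:ℝ) := by
              simpa using ((hasDerivAt_id (0:ℝ)).neg.mul_const a)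
            exact (Real.hasDerivAt_exp (-(0:ℝ) * a)).comp 0 h1
          simpa using this
        have := hasDerivAt_iff_tendsto_slope.mp hd
        refine this.congr' ?_
        filter_upwards [self_mem_nhdsWithin] with b hb
        have hb0 : b ≠ 0 := hb
        simp [slope, hh, hb0, sub_zero, div_eq_inv_mul]
      · have h0 : h 0 = -a := by simp [hh]
        rw [← h0]
        exact tendsto_pure_nhds h 0
    have hhβ : Tendsto (fun n => h (β n)) atTop (𝓝 (-a)) := hht.comp hβ
    -- the rewritten expression and its limit
    have hlim : Tendsto
        (fun n => c * (1 + p * σ * (EK n * β n) * (s * h (β n) + (1 - c)) /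
          ((s - β n) * s))) atTop
        (𝓝 (c * (1 + p * σ * βind * (s * (-a) + (1 - c)) / ((s - 0) * s)))) := by
      refine Tendsto.const_mul _ ?_
      refine Tendsto.const_add _ ?_
      refine Tendsto.div ?_ ?_ ?_
      · exact ((tendsto_const_nhds.mul hEKβ).mul
          ((tendsto_const_nhds.mul hhβ).add tendsto_const_nhds))
      · exact (tendsto_const_nhds.sub hβ).mul tendsto_const_nhds
      · have : (0:ℝ) < (s - 0) * s := by rw [sub_zero]; exact mul_pos hs hs
        exact ne_of_gt this
    -- eventual equality with the original expression
    have hev : ∀ᶠ n in atTop, |β n - 0| < s / 2 :=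
      hβ.eventually (eventually_abs_sub_lt 0 (by linarith))
    have heq : ∀ᶠ n in atTop,
        c * (1 + p * σ * (EK n * β n) * (s * h (β n) + (1 - c)) / ((s - β n) * s)) =
        Real.exp (-(α + σ) * a) *
          (1 + p * σ * EK n / (α + σ - β n) *
                (Real.exp (-(β n) * a) - Real.exp (-(α + σ) * a))
             - p * σ * EK n / (α + σ) * (1 - Real.exp (-(α + σ) * a))) := by
      filter_upwards [hev] with n hn
      rw [abs_sub_lt_iff, sub_zero] at hn
      have hsb : s - β n ≠ 0 := by
        have : β n < s := by linarith [hn.1]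
        linarith
      have hs0 : s ≠ 0 := ne_of_gt hs
      rcases eq_or_ne (β n) 0 with hb0 | hb0
      · simp only [hh, hb0, if_pos rfl, hc, hsdef, neg_zero, zero_mul, Real.exp_zero,
          mul_zero, sub_zero]
        field_simp
        ring
      · simp only [hh, if_neg hb0, hc, hsdef]
        rw [← hsdef]
        field_simp
        ring
    have := hlim.congr' heq
    convert this using 2
    have hs0 : s ≠ 0 := ne_of_gt hs
    rw [hc, hsdef]
    have hs1 : α + σ ≠ 0 := ne_of_gt hs
    field_simp
    ring
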